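/- Let G be a finite simple graph and E_cs an edge contraction set such that G ⫽ E_cs is cycle-invariant (there is a one-to-one correspondence between simple cycles of G and simple cycles of G ⫽ E_cs). Then G ⫽ E_cs is edge-matching; that is, |E(G) \ E_cs| = |E(G ⫽ E_cs)|. -/

import Mathlib

/-- The simple graph contraction of `G` over the partition of its vertex set given by the
fibers of `f` (cells are fibers): distinct cells are adjacent iff some pair of their members
is adjacent in `G` (self-loops and duplicate edges removed). -/
def contraction {V W : Type*} (G : SimpleGraph V) (f : V → W) : SimpleGraph W where
  Adj i j := i ≠ j ∧ ∃ u v, f u = i ∧ f v = j ∧ G.Adj u v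
  symm := ⟨fun _ _ ⟨hne, u, v, hu, hv, h⟩ => ⟨hne.symm, v, u, hv, hu, h.symm⟩⟩
  loopless := ⟨fun _ ⟨h, _⟩ => h rfl⟩

/-- The edge-based contraction `G ⫽ E_cs`: the contraction of `G` over the partition of
`V(G)` into connected components of the graph `(V(G), E_cs)`. -/
def contractionE {V : Type*} (G : SimpleGraph V) (Ecs : Set (Sym2 V)) :
    SimpleGraph (SimpleGraph.fromEdgeSet Ecs).ConnectedComponent :=
  contraction G (SimpleGraph.fromEdgeSet Ecs).connectedComponentMk

/-- The type of simple cycles of a graph (as cycle walks based at a vertex). -/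
def CycleType {V : Type*} (G : SimpleGraph V) := Σ v : V, {w : G.Walk v v // w.IsCycle}

open SimpleGraph

namespace EMAux

/-! ### Removing consecutive duplicates from a list -/

open Classical in
noncomputable def dc {α : Type*} : List α → List α
  | [] => []
  | [a] => [a]
  | a :: b :: l => if a = b then dc (b :: l) else a :: dc (b :: l)

open Classical in
lemma dc_cons_cons {α : Type*} (a b : α) (l : List α) :
    dc (a :: b :: l) = if a = b then dc (b :: l) else a :: dc (b :: l) := rfl

lemma dc_cons_ne {α : Type*} {a b : α} (l : List α) (h : a ≠ b) :
    dc (a :: b :: l) = a :: dc (b :: l) := by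
  rw [dc_cons_cons, if_neg h]

lemma dc_cons_head {α : Type*} {a b : α} {l : List α} (hl : l.head? = some b) (h : a ≠ b) :
    dc (a :: l) = a :: dc l := by
  cases l with
  | nil => simp at hl
  | cons c t =>
    have : c = b := by simpa using hl
    subst this
    exact dc_cons_ne t h

lemma dc_const {α : Type*} {a : α} : ∀ {l : List α}, l ≠ [] → (∀ x ∈ l, x = a) → dc l = [a]
  | [], h, _ => absurd rfl h
  | [x], _, hx => by simp [dc, hx x (by simp)]
  | x :: y :: l, _, hx => by
    rw [hx x (by simp), hx y (by simp), dc_cons_cons, if_pos rfl]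
    exact dc_const (by simp) (fun z hz => by
      rcases List.mem_cons.mp hz with rfl | hz
      · rfl
      · exact hx z (by simp [hz]))

lemma dc_block {α : Type*} {a b : α} (hab : a ≠ b) :
    ∀ (l₁ : List α), l₁ ≠ [] → (∀ x ∈ l₁, x = a) → ∀ (l₂ : List α), l₂.head? = some b →
      dc (l₁ ++ l₂) = a :: dc l₂
  | [], h, _ => absurd rfl h
  | [x], _, hx => by
    intro l₂ hl₂
    cases l₂ with
    | nil => simp at hl₂
    | cons c t =>
      have hc : c = b := by simpa using hl₂
      rw [hx x (by simp), List.singleton_append, hc, dc_cons_ne t hab]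
  | x :: y :: l, _, hx => by
    intro l₂ hl₂
    have h1 : x = a := hx x (by simp)
    have h2 : y = a := hx y (by simp)
    have hrec := dc_block hab (y :: l) (by simp)
      (fun z hz => hx z (List.mem_cons_of_mem _ hz)) l₂ hl₂
    rw [List.cons_append, h1]
    rw [List.cons_append] at hrec ⊢
    rw [h2] at hrec ⊢
    rw [dc_cons_cons, if_pos rfl]
    exact hrec

/-! ### A walk in a simple graph is determined by its support -/

lemma walk_eq_of_support_eq {V : Type*} {G : SimpleGraph V} :
    ∀ {u v : V} (p q : G.Walk u v), p.support = q.support → p = q := by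
  intro u v p
  induction p with
  | nil =>
    intro q h
    cases q with
    | nil => rfl
    | cons h' q' =>
      exfalso
      have hq : q'.support = [] := by
        have := h.symm
        rw [Walk.support_cons, Walk.support_nil] at this
        simpa using this
      exact Walk.support_ne_nil q' hq
  | cons h p ih =>
    intro q hq
    cases q with
    | nil =>
      exfalso
      have hp : p.support = [] := by
        rw [Walk.support_cons, Walk.support_nil] at hq
        simpa using hq
      exact Walk.support_ne_nil p hp
    | cons h' q' =>
      rw [Walk.support_cons, Walk.support_cons] at hq
      have hts : p.support = q'.support := by injection hq
      have hww := hts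
      rw [p.support_eq_cons, q'.support_eq_cons] at hww
      injection hww with hww _
      subst hww
      rw [ih q' hts]

/-! ### Finiteness of the type of cycles -/

lemma finite_cycleType {V : Type*} [Finite V] (G : SimpleGraph V) : Finite (CycleType G) := by
  haveI := Fintype.ofFinite V
  haveI := Classical.decEq V
  apply Finite.of_injective
    (fun C : CycleType G => ((C.1, ⟨C.2.1.support.tail, C.2.2.support_nodup⟩) :
      V × {l : List V // l.Nodup}))
  rintro ⟨v, W, hW⟩ ⟨v', W', hW'⟩ h
  simp only [Prod.mk.injEq, Subtype.mk.injEq] at h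
  obtain ⟨rfl, htail⟩ := h
  have hsup : W.support = W'.support := by
    rw [W.support_eq_cons, W'.support_eq_cons, htail]
  have := walk_eq_of_support_eq W W' hsup
  subst this
  rfl

/-! ### Setup -/

section Graph

variable {V : Type*} [DecidableEq V]

/-- The component map. -/
abbrev fC (Ecs : Set (Sym2 V)) : V → (SimpleGraph.fromEdgeSet Ecs).ConnectedComponent :=
  (SimpleGraph.fromEdgeSet Ecs).connectedComponentMk

variable (G : SimpleGraph V) (Ecs : Set (Sym2 V))

local notation "f" => fC Ecs


lemma adjK {c d : (fromEdgeSet Ecs).ConnectedComponent} :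
    (contractionE G Ecs).Adj c d ↔ c ≠ d ∧ ∃ u v, f u = c ∧ f v = d ∧ G.Adj u v := Iff.rfl

variable (hE : Ecs ⊆ G.edgeSet)

/-- A walk in `G` between two vertices in the same `Ecs`-component, entirely inside that
component, with nodup support. -/
noncomputable def conn (x y : V) (hxy : f x = f y) : G.Walk x y :=
  Walk.transfer ((SimpleGraph.ConnectedComponent.eq.mp hxy).some.toPath :
      (fromEdgeSet Ecs).Path x y).1 G
    (fun e he => hE ((edgeSet_fromEdgeSet Ecs ▸ Walk.edges_subset_edgeSet _ he).1))

lemma conn_support_nodup {x y : V} (hxy : f x = f y) :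
    (conn G Ecs hE x y hxy).support.Nodup := by
  rw [conn, Walk.support_transfer]
  exact ((SimpleGraph.ConnectedComponent.eq.mp hxy).some.toPath).2.support_nodup

lemma conn_edges {x y : V} (hxy : f x = f y) {e : Sym2 V}
    (he : e ∈ (conn G Ecs hE x y hxy).edges) : e ∈ Ecs := by
  rw [conn, Walk.edges_transfer] at he
  exact (edgeSet_fromEdgeSet Ecs ▸ Walk.edges_subset_edgeSet _ he).1

lemma conn_support_comp {x y : V} (hxy : f x = f y) {z : V}
    (hz : z ∈ (conn G Ecs hE x y hxy).support) : f z = f x := by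
  rw [conn, Walk.support_transfer] at hz
  exact (SimpleGraph.ConnectedComponent.sound ((Walk.takeUntil _ z hz).reachable)).symm

/-- Chosen endpoints of a representative edge for an adjacency in the contraction. -/
noncomputable def bw1 {c d} (h : (contractionE G Ecs).Adj c d) : V :=
  ((adjK G Ecs).mp h).2.choose

noncomputable def bw2 {c d} (h : (contractionE G Ecs).Adj c d) : V :=
  ((adjK G Ecs).mp h).2.choose_spec.choose

lemma bw_spec {c d} (h : (contractionE G Ecs).Adj c d) :
    f (bw1 G Ecs h) = c ∧ f (bw2 G Ecs h) = d ∧ G.Adj (bw1 G Ecs h) (bw2 G Ecs h) :=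
  ((adjK G Ecs).mp h).2.choose_spec.choose_spec

/-- Lift a walk of the contraction to a walk of `G`, from a prescribed start vertex in the
first component to a prescribed end vertex in the last component. -/
noncomputable def liftAux :
    ∀ {a b : (fromEdgeSet Ecs).ConnectedComponent} (_ : (contractionE G Ecs).Walk a b)
      (v : V) (_ : f v = a) (u₀ : V) (_ : f u₀ = b), G.Walk v u₀
  | _, _, .nil, v, hv, u₀, hu => conn G Ecs hE v u₀ (hv.trans hu.symm)
  | _, _, .cons h W, v, hv, u₀, hu =>
    (conn G Ecs hE v (bw1 G Ecs h) (by rw [hv, (bw_spec G Ecs h).1])).append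
      (Walk.cons (bw_spec G Ecs h).2.2
        (liftAux W (bw2 G Ecs h) (bw_spec G Ecs h).2.1 u₀ hu))

lemma conn_edges_comp {x y : V} (hxy : f x = f y) {e : Sym2 V}
    (he : e ∈ (conn G Ecs hE x y hxy).edges) : (Sym2.map f e).IsDiag := by
  rw [conn, Walk.edges_transfer] at he
  have hH := Walk.edges_subset_edgeSet _ he
  induction e using Sym2.ind with
  | _ a b =>
    rw [SimpleGraph.mem_edgeSet] at hH
    rw [Sym2.map_pair_eq, Sym2.mk_isDiag_iff]
    exact SimpleGraph.ConnectedComponent.sound hH.reachable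

lemma liftAux_support_comp :
    ∀ {a b : (fromEdgeSet Ecs).ConnectedComponent} (W : (contractionE G Ecs).Walk a b)
      (v : V) (hv : f v = a) (u₀ : V) (hu : f u₀ = b)
      (x : V), x ∈ (liftAux G Ecs hE W v hv u₀ hu).support → f x ∈ W.support := by
  intro a b W
  induction W with
  | nil =>
    intro v hv u₀ hu x hx
    rw [liftAux] at hx
    rw [Walk.support_nil, List.mem_singleton]
    rw [conn_support_comp G Ecs hE _ hx, hv]
  | cons h W ih =>
    intro v hv u₀ hu x hx
    rw [liftAux] at hx
    rw [Walk.mem_support_append_iff] at hx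
    rw [Walk.support_cons, List.mem_cons]
    rcases hx with hx | hx
    · exact Or.inl (by rw [conn_support_comp G Ecs hE _ hx, hv])
    · rw [Walk.support_cons, List.mem_cons] at hx
      rcases hx with rfl | hx
      · exact Or.inl (bw_spec G Ecs h).1
      · exact Or.inr (ih _ _ _ _ x hx)

lemma liftAux_support_nodup :
    ∀ {a b : (fromEdgeSet Ecs).ConnectedComponent} (W : (contractionE G Ecs).Walk a b)
      (v : V) (hv : f v = a) (u₀ : V) (hu : f u₀ = b),
      W.support.Nodup → (liftAux G Ecs hE W v hv u₀ hu).support.Nodup := by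
  intro a b W
  induction W with
  | nil =>
    intro v hv u₀ hu _
    rw [liftAux]
    exact conn_support_nodup G Ecs hE _
  | cons h W ih =>
    intro v hv u₀ hu hnd
    rw [Walk.support_cons, List.nodup_cons] at hnd
    rw [liftAux, Walk.support_append, Walk.support_cons, List.tail_cons, List.nodup_append]
    refine ⟨conn_support_nodup G Ecs hE _, ih _ _ _ _ hnd.2, ?_⟩
    intro x hx x' hx' hxx'
    subst hxx'
    have h1 : f x = _ := conn_support_comp G Ecs hE _ hx
    have h2 := liftAux_support_comp G Ecs hE W _ _ _ _ x hx'
    rw [h1, hv] at h2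
    exact hnd.1 h2

lemma liftAux_dc :
    ∀ {a b : (fromEdgeSet Ecs).ConnectedComponent} (W : (contractionE G Ecs).Walk a b)
      (v : V) (hv : f v = a) (u₀ : V) (hu : f u₀ = b),
      dc ((liftAux G Ecs hE W v hv u₀ hu).support.map f) = W.support := by
  intro a b W
  induction W with
  | nil =>
    intro v hv u₀ hu
    rw [liftAux, Walk.support_nil]
    refine dc_const (by simp [Walk.support_ne_nil]) ?_
    intro x hx
    rw [List.mem_map] at hx
    obtain ⟨z, hz, rfl⟩ := hx
    rw [conn_support_comp G Ecs hE _ hz, hv]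
  | cons h W ih =>
    rename_i a c b
    intro v hv u₀ hu
    rw [liftAux, Walk.support_append, Walk.support_cons, Walk.support_cons, List.tail_cons,
      List.map_append]
    have hhead : ((liftAux G Ecs hE W (bw2 G Ecs h) (bw_spec G Ecs h).2.1 u₀ hu).support.map
        f).head? = some (f (bw2 G Ecs h)) := by
      rw [Walk.support_eq_cons]
      simp only [List.map_cons, List.head?_cons]
    have hab : a ≠ f (bw2 G Ecs h) := by
      rw [(bw_spec G Ecs h).2.1]
      exact h.1
    have hall : ∀ x ∈ (conn G Ecs hE v (bw1 G Ecs h)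
        (by rw [hv, (bw_spec G Ecs h).1])).support.map f, x = a := by
      intro x hx
      rw [List.mem_map] at hx
      obtain ⟨z, hz, rfl⟩ := hx
      rw [conn_support_comp G Ecs hE _ hz, hv]
    rw [dc_block hab _ (by simp [Walk.support_ne_nil]) hall _ hhead, ih _ _ _ _]

lemma liftAux_edges :
    ∀ {a b : (fromEdgeSet Ecs).ConnectedComponent} (W : (contractionE G Ecs).Walk a b)
      (v : V) (hv : f v = a) (u₀ : V) (hu : f u₀ = b) (e : Sym2 V),
      e ∈ (liftAux G Ecs hE W v hv u₀ hu).edges →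
        (Sym2.map f e).IsDiag ∨ Sym2.map f e ∈ W.edges := by
  intro a b W
  induction W with
  | nil =>
    intro v hv u₀ hu e he
    rw [liftAux] at he
    exact Or.inl (conn_edges_comp G Ecs hE _ he)
  | cons h W ih =>
    intro v hv u₀ hu e he
    rw [liftAux, Walk.edges_append, Walk.edges_cons] at he
    rw [Walk.edges_cons]
    rcases List.mem_append.mp he with he | he
    · exact Or.inl (conn_edges_comp G Ecs hE _ he)
    · rcases List.mem_cons.mp he with rfl | he
      · right
        rw [Sym2.map_pair_eq, (bw_spec G Ecs h).1, (bw_spec G Ecs h).2.1]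
        exact List.mem_cons_self
      · rcases ih _ _ _ _ e he with hd | hm
        · exact Or.inl hd
        · exact Or.inr (List.mem_cons_of_mem _ hm)

/-- Lift of a cycle of the contraction, bundled with its key properties. -/
noncomputable def liftC {c : (fromEdgeSet Ecs).ConnectedComponent}
    (W : (contractionE G Ecs).Walk c c) (hW : W.IsCycle) :
    {D : CycleType G // f D.1 = c ∧ dc (D.2.1.support.map f) = W.support} :=
  match W, hW with
  | SimpleGraph.Walk.nil, hW => absurd hW.three_le_length (by simp)
  | SimpleGraph.Walk.cons h W', hW => by
    refine ⟨⟨bw1 G Ecs h, Walk.cons (bw_spec G Ecs h).2.2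
      (liftAux G Ecs hE W' (bw2 G Ecs h) (bw_spec G Ecs h).2.1 (bw1 G Ecs h)
        (bw_spec G Ecs h).1), ?_⟩, (bw_spec G Ecs h).1, ?_⟩
    · rw [Walk.cons_isCycle_iff]
      constructor
      · rw [Walk.isPath_def]
        refine liftAux_support_nodup G Ecs hE W' _ _ _ _ ?_
        have := hW.support_nodup
        rwa [Walk.support_cons, List.tail_cons] at this
      · intro hmem
        rcases liftAux_edges G Ecs hE W' _ _ _ _ _ hmem with hd | hm
        · rw [Sym2.map_pair_eq, (bw_spec G Ecs h).1, (bw_spec G Ecs h).2.1,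
            Sym2.mk_isDiag_iff] at hd
          exact h.1 hd
        · rw [Sym2.map_pair_eq, (bw_spec G Ecs h).1, (bw_spec G Ecs h).2.1] at hm
          have := hW.edges_nodup
          rw [Walk.edges_cons, List.nodup_cons] at this
          exact this.1 hm
    · dsimp only
      rw [Walk.support_cons, List.map_cons, Walk.support_cons]
      have hhead : ((liftAux G Ecs hE W' (bw2 G Ecs h) (bw_spec G Ecs h).2.1 (bw1 G Ecs h)
          (bw_spec G Ecs h).1).support.map f).head? = some (f (bw2 G Ecs h)) := by
        rw [Walk.support_eq_cons]
        simp only [List.map_cons, List.head?_cons]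
      have hcb : c ≠ f (bw2 G Ecs h) := by
        rw [(bw_spec G Ecs h).2.1]
        exact h.1
      have hcb' : f (bw1 G Ecs h) ≠ f (bw2 G Ecs h) := by
        rw [(bw_spec G Ecs h).1]
        exact hcb
      rw [dc_cons_head hhead hcb', liftAux_dc G Ecs hE W' _ _ _ _, (bw_spec G Ecs h).1]

lemma liftC_fst_injective {C C' : CycleType (contractionE G Ecs)}
    (h : (liftC G Ecs hE C.2.1 C.2.2).1 = (liftC G Ecs hE C'.2.1 C'.2.2).1) : C = C' := by
  obtain ⟨c, W, hW⟩ := C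
  obtain ⟨c', W', hW'⟩ := C'
  obtain ⟨hf, hdc⟩ := (liftC G Ecs hE W hW).2
  obtain ⟨hf', hdc'⟩ := (liftC G Ecs hE W' hW').2
  rw [h] at hf hdc
  have hcc : c = c' := hf.symm.trans hf'
  subst hcc
  have hsup : W.support = W'.support := hdc.symm.trans hdc'
  have := walk_eq_of_support_eq W W' hsup
  subst this
  rfl

include hE in
lemma no_small_cycle [Finite V]
    (hci : Nonempty (CycleType G ≃ CycleType (contractionE G Ecs)))
    (B : CycleType G) (hB : (dc (B.2.1.support.map f)).length ≤ 3) : False := by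
  haveI := finite_cycleType G
  haveI := finite_cycleType (contractionE G Ecs)
  have hlen : ∀ C : CycleType (contractionE G Ecs),
      4 ≤ (dc (((liftC G Ecs hE C.2.1 C.2.2).1).2.1.support.map f)).length := by
    intro C
    rw [(liftC G Ecs hE C.2.1 C.2.2).2.2, Walk.length_support]
    have := C.2.2.three_le_length
    omega
  have key : ∀ C : CycleType (contractionE G Ecs), (liftC G Ecs hE C.2.1 C.2.2).1 ≠ B := by
    intro C hCB
    have h4 := hlen C
    rw [hCB] at h4
    omega
  have h1 : Nat.card (Option (CycleType (contractionE G Ecs))) ≤ Nat.card (CycleType G) := by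
    apply Nat.card_le_card_of_injective
      (fun o : Option (CycleType (contractionE G Ecs)) =>
        Option.rec B (fun C => (liftC G Ecs hE C.2.1 C.2.2).1) o)
    rintro (_ | C) (_ | C') hoo
    · rfl
    · exact absurd hoo.symm (key C')
    · exact absurd hoo (key C)
    · exact congrArg _ (liftC_fst_injective G Ecs hE hoo)
  rw [Finite.card_option] at h1
  have h2 : Nat.card (CycleType G) = Nat.card (CycleType (contractionE G Ecs)) :=
    Nat.card_congr hci.some
  omega


end Graph

end EMAux

theorem edge_matching_of_cycle_invariant {n : ℕ} (G : SimpleGraph (Fin n))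
    (Ecs : Set (Sym2 (Fin n))) (hE : Ecs ⊆ G.edgeSet)
    (hci : Nonempty (CycleType G ≃ CycleType (contractionE G Ecs))) :
    Nat.card (G.edgeSet \ Ecs : Set (Sym2 (Fin n))) =
      Nat.card (contractionE G Ecs).edgeSet := by
  classical
  by_cases hb1 : ∃ u v : Fin n, G.Adj u v ∧ s(u, v) ∉ Ecs ∧ EMAux.fC Ecs u = EMAux.fC Ecs v
  · -- an edge outside `Ecs` inside a single component: produces a small cycle
    obtain ⟨u, v, hadj, hne, hco⟩ := hb1
    have hP : (EMAux.conn G Ecs hE u v hco).IsPath := by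
      rw [SimpleGraph.Walk.isPath_def]
      exact EMAux.conn_support_nodup G Ecs hE hco
    have hcyc : (SimpleGraph.Walk.cons hadj.symm (EMAux.conn G Ecs hE u v hco)).IsCycle := by
      rw [SimpleGraph.Walk.cons_isCycle_iff]
      refine ⟨hP, fun hmem => hne ?_⟩
      have := EMAux.conn_edges G Ecs hE hco hmem
      rwa [Sym2.eq_swap] at this
    have hlen : (EMAux.dc ((SimpleGraph.Walk.cons hadj.symm
        (EMAux.conn G Ecs hE u v hco)).support.map (EMAux.fC Ecs))).length ≤ 3 := by
      rw [EMAux.dc_const (a := EMAux.fC Ecs u) (by simp) ?_]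
      · simp
      · intro x hx
        simp only [SimpleGraph.Walk.support_cons, List.map_cons, List.mem_cons,
          List.mem_map] at hx
        rcases hx with rfl | ⟨z, hz, rfl⟩
        · exact hco.symm
        · exact EMAux.conn_support_comp G Ecs hE hco hz
    exact (EMAux.no_small_cycle G Ecs hE hci
      ⟨v, ⟨SimpleGraph.Walk.cons hadj.symm (EMAux.conn G Ecs hE u v hco), hcyc⟩⟩ hlen).elim
  · by_cases hb2 : ∃ u v u' v' : Fin n, (G.Adj u v ∧ s(u, v) ∉ Ecs) ∧
        (G.Adj u' v' ∧ s(u', v') ∉ Ecs) ∧ EMAux.fC Ecs u = EMAux.fC Ecs u' ∧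
        EMAux.fC Ecs v = EMAux.fC Ecs v' ∧ s(u, v) ≠ s(u', v')
    · -- two distinct edges outside `Ecs` with the same image: produces a small cycle
      obtain ⟨u, v, u', v', ⟨hadj, hne⟩, ⟨hadj', hne'⟩, hcu, hcv, hEne⟩ := hb2
      have hcd : EMAux.fC Ecs u ≠ EMAux.fC Ecs v := fun hcc => hb1 ⟨u, v, hadj, hne, hcc⟩
      set P1 := EMAux.conn G Ecs hE v v' hcv with hP1
      set P2 := EMAux.conn G Ecs hE u' u hcu.symm with hP2
      set Q := P1.append (SimpleGraph.Walk.cons hadj'.symm P2) with hQ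
      have hQsup : Q.support = P1.support ++ P2.support := by
        rw [hQ, SimpleGraph.Walk.support_append, SimpleGraph.Walk.support_cons, List.tail_cons]
      have hQpath : Q.IsPath := by
        rw [SimpleGraph.Walk.isPath_def, hQsup, List.nodup_append]
        refine ⟨EMAux.conn_support_nodup G Ecs hE hcv,
          EMAux.conn_support_nodup G Ecs hE hcu.symm, ?_⟩
        intro x hx1 x' hx2 hxx'
        subst hxx'
        have h1 := EMAux.conn_support_comp G Ecs hE hcv hx1
        have h2 := EMAux.conn_support_comp G Ecs hE hcu.symm hx2
        rw [h1] at h2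
        exact hcd (hcu.trans h2.symm)
      have hQe : s(u, v) ∉ Q.edges := by
        intro hmem
        rw [hQ, SimpleGraph.Walk.edges_append, SimpleGraph.Walk.edges_cons] at hmem
        rcases List.mem_append.mp hmem with hm | hm
        · exact hne (EMAux.conn_edges G Ecs hE hcv hm)
        · rcases List.mem_cons.mp hm with hm | hm
          · rcases Sym2.eq_iff.mp hm with ⟨rfl, rfl⟩ | ⟨rfl, rfl⟩
            · exact hcd hcv.symm
            · exact hEne rfl
          · exact hne (EMAux.conn_edges G Ecs hE hcu.symm hm)
      have hcyc : (SimpleGraph.Walk.cons hadj Q).IsCycle := by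
        rw [SimpleGraph.Walk.cons_isCycle_iff]
        exact ⟨hQpath, hQe⟩
      have hlen : (EMAux.dc ((SimpleGraph.Walk.cons hadj Q).support.map
          (EMAux.fC Ecs))).length ≤ 3 := by
        have hall1 : ∀ x ∈ P1.support.map (EMAux.fC Ecs), x = EMAux.fC Ecs v := by
          intro x hx
          rw [List.mem_map] at hx
          obtain ⟨z, hz, rfl⟩ := hx
          exact EMAux.conn_support_comp G Ecs hE hcv hz
        have hall2 : ∀ x ∈ P2.support.map (EMAux.fC Ecs), x = EMAux.fC Ecs u := by
          intro x hx
          rw [List.mem_map] at hx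
          obtain ⟨z, hz, rfl⟩ := hx
          rw [EMAux.conn_support_comp G Ecs hE hcu.symm hz]
          exact hcu.symm
        have hd2 : EMAux.dc (P2.support.map (EMAux.fC Ecs)) = [EMAux.fC Ecs u] :=
          EMAux.dc_const (by simp [SimpleGraph.Walk.support_ne_nil]) hall2
        have hh2 : (P2.support.map (EMAux.fC Ecs)).head? = some (EMAux.fC Ecs u) := by
          rw [P2.support_eq_cons]
          simp only [List.map_cons, List.head?_cons, hcu]
        have hd12 : EMAux.dc (P1.support.map (EMAux.fC Ecs) ++
            P2.support.map (EMAux.fC Ecs)) = EMAux.fC Ecs v :: [EMAux.fC Ecs u] := by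
          rw [EMAux.dc_block (fun hvu => hcd hvu.symm) _
            (by simp [SimpleGraph.Walk.support_ne_nil]) hall1 _ hh2, hd2]
        have hh1 : (P1.support.map (EMAux.fC Ecs) ++
            P2.support.map (EMAux.fC Ecs)).head? = some (EMAux.fC Ecs v) := by
          rw [P1.support_eq_cons]
          simp only [List.map_cons, List.cons_append, List.head?_cons]
        rw [SimpleGraph.Walk.support_cons, List.map_cons, hQsup, List.map_append,
          EMAux.dc_cons_head hh1 hcd, hd12]
        simp
      exact (EMAux.no_small_cycle G Ecs hE hci
        ⟨u, ⟨SimpleGraph.Walk.cons hadj Q, hcyc⟩⟩ hlen).elim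
    · -- the edge map is a bijection
      push_neg at hb1 hb2
      have hmem : ∀ e ∈ G.edgeSet \ Ecs,
          Sym2.map (EMAux.fC Ecs) e ∈ (contractionE G Ecs).edgeSet := by
        intro e he
        induction e using Sym2.ind with
        | _ u v =>
          have hadj : G.Adj u v := he.1
          have hfne : EMAux.fC Ecs u ≠ EMAux.fC Ecs v := hb1 u v hadj he.2
          rw [Sym2.map_pair_eq, SimpleGraph.mem_edgeSet]
          exact ⟨hfne, u, v, rfl, rfl, hadj⟩
      have hinj2 : ∀ e₁ ∈ G.edgeSet \ Ecs, ∀ e₂ ∈ G.edgeSet \ Ecs,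
          Sym2.map (EMAux.fC Ecs) e₁ = Sym2.map (EMAux.fC Ecs) e₂ → e₁ = e₂ := by
        intro e₁ he₁ e₂ he₂ hmap
        induction e₁ using Sym2.ind with
        | _ u v =>
          induction e₂ using Sym2.ind with
          | _ u' v' =>
            have h1 : G.Adj u v := he₁.1
            have h2 : G.Adj u' v' := he₂.1
            rw [Sym2.map_pair_eq, Sym2.map_pair_eq, Sym2.eq_iff] at hmap
            rcases hmap with ⟨ha, hb⟩ | ⟨ha, hb⟩
            · exact hb2 u v u' v' ⟨h1, he₁.2⟩ ⟨h2, he₂.2⟩ ha hb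
            · have := hb2 u v v' u' ⟨h1, he₁.2⟩ ⟨h2.symm, by rw [Sym2.eq_swap]; exact he₂.2⟩ ha hb
              rwa [Sym2.eq_swap (a := v')] at this
      refine Nat.card_congr (Equiv.ofBijective
        (fun e : (G.edgeSet \ Ecs : Set (Sym2 (Fin n))) =>
          (⟨Sym2.map (EMAux.fC Ecs) e.1, hmem e.1 e.2⟩ : (contractionE G Ecs).edgeSet))
        ⟨?_, ?_⟩)
      · rintro ⟨e₁, he₁⟩ ⟨e₂, he₂⟩ h
        rw [Subtype.mk.injEq] at h
        exact Subtype.ext (hinj2 e₁ he₁ e₂ he₂ h)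
      · rintro ⟨E, hEk⟩
        induction E using Sym2.ind with
        | _ c d =>
          rw [SimpleGraph.mem_edgeSet] at hEk
          obtain ⟨hcd, w, x, hw, hx, hadj⟩ := (EMAux.adjK G Ecs).mp hEk
          have hnotE : s(w, x) ∉ Ecs := by
            intro hmm
            have : (SimpleGraph.fromEdgeSet Ecs).Adj w x :=
              (SimpleGraph.fromEdgeSet_adj Ecs).mpr ⟨hmm, hadj.ne⟩
            exact hcd (hw ▸ hx ▸ SimpleGraph.ConnectedComponent.sound this.reachable)
          refine ⟨⟨s(w, x), (SimpleGraph.mem_edgeSet G).mpr hadj, hnotE⟩, ?_⟩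
          apply Subtype.ext
          show Sym2.map (EMAux.fC Ecs) s(w, x) = s(c, d)
          rw [Sym2.map_pair_eq, hw, hx]
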